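/- For the complete bipartite graph K_{s,t} with s ≥ t ≥ 2, tpc(K_{s,t}) = 3. -/

import Mathlib

/-- Interleave two lists, starting with the first. -/
def List.tpcInterleave {α : Type*} : List α → List α → List α
  | [], ys => ys
  | x :: xs, ys => x :: List.tpcInterleave ys xs
termination_by xs ys => xs.length + ys.length

namespace SimpleGraph

variable {V : Type*} {α : Type*} {G : SimpleGraph V}

/-- The sequence of colors `cE e₀, cV v₁, cE e₁, cV v₂, …, cE e_{m-1}` of the edges and
internal vertices of a walk, in order. -/
def Walk.totalColorSeq (cV : V → α) (cE : Sym2 V → α) {u v : V} (p : G.Walk u v) : List α :=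
  (p.edges.map cE).tpcInterleave (p.support.tail.dropLast.map cV)

/-- A walk is total-proper if in its color sequence, any two entries at distance 1 or 2
are distinct.  This says exactly that adjacent edges get distinct colors, adjacent internal
vertices get distinct colors, and every internal vertex gets a color distinct from those of
its incident edges on the walk. -/
def Walk.IsTotalProper (cV : V → α) (cE : Sym2 V → α) {u v : V} (p : G.Walk u v) : Prop :=
  ∀ i a b, (p.totalColorSeq cV cE)[i]? = some a →
    ((p.totalColorSeq cV cE)[i + 1]? = some b ∨ (p.totalColorSeq cV cE)[i + 2]? = some b) →
    a ≠ b

/-- A total coloring (given by a vertex coloring `cV` and an edge coloring `cE`) makes `G`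
total-proper connected if every two distinct vertices are joined by a total-proper path. -/
def IsTPCColoring (G : SimpleGraph V) (cV : V → α) (cE : Sym2 V → α) : Prop :=
  ∀ u v : V, u ≠ v → ∃ p : G.Walk u v, p.IsPath ∧ p.IsTotalProper cV cE

/-- The total-proper connection number: the minimum number of colors in a total coloring
making `G` total-proper connected. -/
noncomputable def tpc (G : SimpleGraph V) : ℕ :=
  sInf {k | ∃ (cV : V → Fin k) (cE : Sym2 V → Fin k), G.IsTPCColoring cV cE}

end SimpleGraph

namespace TPCAux

open SimpleGraph

theorem interleave_length {α : Type*} : ∀ (xs ys : List α),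
    (List.tpcInterleave xs ys).length = xs.length + ys.length
  | [], ys => by simp [List.tpcInterleave]
  | x :: xs, ys => by
      simp [List.tpcInterleave, interleave_length ys xs]; omega
termination_by xs ys => xs.length + ys.length

/-- The pairwise-distance-1-or-2 distinctness condition on a list. -/
def Ok {α : Type*} (l : List α) : Prop :=
  ∀ i a b, l[i]? = some a → (l[i + 1]? = some b ∨ l[i + 2]? = some b) → a ≠ b

theorem isTotalProper_of_ok {V α : Type*} {G : SimpleGraph V} {cV : V → α} {cE : Sym2 V → α}
    {u v : V} {p : G.Walk u v} (h : Ok (p.totalColorSeq cV cE)) : p.IsTotalProper cV cE := h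

theorem ok_single {α : Type*} (x : α) : Ok [x] := by
  intro i a b h1 h2
  rcases i with _ | i
  · rcases h2 with h2 | h2 <;> simp at h2
  · simp at h1

theorem ok_triple {α : Type*} {x y z : α} (hxy : x ≠ y) (hyz : y ≠ z) (hxz : x ≠ z) :
    Ok [x, y, z] := by
  intro i a b h1 h2
  rcases i with _ | _ | _ | i <;> rcases h2 with h2 | h2 <;> simp_all

theorem ok_seven : Ok ([1, 2, 0, 1, 2, 0, 1] : List (Fin 3)) := by
  intro i a b h1 h2
  rcases i with _ | _ | _ | _ | _ | _ | _ | i <;>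
    rcases h2 with h2 | h2 <;> simp_all <;> omega

/-- Vertex coloring of `K_{s,t}`. -/
def cV (s t : ℕ) : Fin s ⊕ Fin t → Fin 3
  | .inl i => if (i : ℕ) = 0 then 1 else 0
  | .inr j => if (j : ℕ) = 0 then 2 else 0

@[simp] theorem cV_inl (s t : ℕ) (i : Fin s) :
    cV s t (Sum.inl i) = if (i : ℕ) = 0 then 1 else 0 := rfl

@[simp] theorem cV_inr (s t : ℕ) (j : Fin t) :
    cV s t (Sum.inr j) = if (j : ℕ) = 0 then 2 else 0 := rfl

/-- Color of the edge between `aᵢ` and `bⱼ`. -/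
def h (s t : ℕ) (i : Fin s) (j : Fin t) : Fin 3 :=
  if (i : ℕ) = 0 then (if (j : ℕ) = 1 then 2 else 0)
  else (if (j : ℕ) = (i : ℕ) + 1 then 2 else 1)

/-- Edge coloring of `K_{s,t}`. -/
def cE (s t : ℕ) : Sym2 (Fin s ⊕ Fin t) → Fin 3 :=
  Sym2.lift ⟨fun x y => match x, y with
    | .inl i, .inr j => h s t i j
    | .inr j, .inl i => h s t i j
    | _, _ => 0, by intro x y; rcases x with i | j <;> rcases y with i' | j' <;> rfl⟩

@[simp] theorem cE_lr (s t : ℕ) (i : Fin s) (j : Fin t) :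
    cE s t s(Sum.inl i, Sum.inr j) = h s t i j := rfl

@[simp] theorem cE_rl (s t : ℕ) (i : Fin s) (j : Fin t) :
    cE s t s(Sum.inr j, Sum.inl i) = h s t i j := rfl

theorem adj_lr (s t : ℕ) (i : Fin s) (j : Fin t) :
    (completeBipartiteGraph (Fin s) (Fin t)).Adj (Sum.inl i) (Sum.inr j) := by simp

theorem adj_rl (s t : ℕ) (i : Fin s) (j : Fin t) :
    (completeBipartiteGraph (Fin s) (Fin t)).Adj (Sum.inr j) (Sum.inl i) := by simp

theorem isTPC (s t : ℕ) (hts : t ≤ s) (ht : 2 ≤ t) :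
    (completeBipartiteGraph (Fin s) (Fin t)).IsTPCColoring (cV s t) (cE s t) := by
  have hs : 2 ≤ s := le_trans ht hts
  intro u v huv
  rcases u with i | j <;> rcases v with i' | j'
  · -- both on the left
    have hii : i ≠ i' := fun h => huv (by rw [h])
    by_cases h0 : (i : ℕ) = 0 ∨ (i' : ℕ) = 0
    · -- one of them is the special vertex a₀ : go through b₀
      refine ⟨Walk.cons (adj_lr s t i ⟨0, by omega⟩)
        (Walk.cons (adj_rl s t i' ⟨0, by omega⟩) Walk.nil), ?_, ?_⟩
      · simp [Walk.isPath_def, hii]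
      · apply isTotalProper_of_ok
        have hseq : (Walk.cons (adj_lr s t i ⟨0, by omega⟩)
            (Walk.cons (adj_rl s t i' ⟨0, by omega⟩) Walk.nil)).totalColorSeq (cV s t) (cE s t)
            = [h s t i ⟨0, by omega⟩, cV s t (Sum.inr ⟨0, by omega⟩), h s t i' ⟨0, by omega⟩] := by
          simp [Walk.totalColorSeq, List.tpcInterleave]
        rw [hseq]
        have hne : ¬ ((i : ℕ) = 0 ∧ (i' : ℕ) = 0) := by
          rintro ⟨ha, hb⟩; exact hii (Fin.ext (by omega))
        rcases h0 with h0 | h0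
        · have hi' : (i' : ℕ) ≠ 0 := fun hh => hne ⟨h0, hh⟩
          apply ok_triple <;> simp [h, h0, hi']
        · have hi : (i : ℕ) ≠ 0 := fun hh => hne ⟨hh, h0⟩
          apply ok_triple <;> simp [h, h0, hi]
    · -- both generic : length-4 path through b₀, a₀, b₁
      push_neg at h0
      obtain ⟨hi, hi'⟩ := h0
      refine ⟨Walk.cons (adj_lr s t i ⟨0, by omega⟩)
        (Walk.cons (adj_rl s t ⟨0, by omega⟩ ⟨0, by omega⟩)
          (Walk.cons (adj_lr s t ⟨0, by omega⟩ ⟨1, by omega⟩)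
            (Walk.cons (adj_rl s t i' ⟨1, by omega⟩) Walk.nil))), ?_, ?_⟩
      · simp [Walk.isPath_def, hii, Fin.ext_iff]
        omega
      · apply isTotalProper_of_ok
        have hseq : (Walk.cons (adj_lr s t i ⟨0, by omega⟩)
            (Walk.cons (adj_rl s t ⟨0, by omega⟩ ⟨0, by omega⟩)
              (Walk.cons (adj_lr s t ⟨0, by omega⟩ ⟨1, by omega⟩)
                (Walk.cons (adj_rl s t i' ⟨1, by omega⟩) Walk.nil)))).totalColorSeq
                  (cV s t) (cE s t)
            = [h s t i ⟨0, by omega⟩, cV s t (Sum.inr ⟨0, by omega⟩),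
               h s t ⟨0, by omega⟩ ⟨0, by omega⟩, cV s t (Sum.inl ⟨0, by omega⟩),
               h s t ⟨0, by omega⟩ ⟨1, by omega⟩, cV s t (Sum.inr ⟨1, by omega⟩),
               h s t i' ⟨1, by omega⟩] := by
          simp [Walk.totalColorSeq, List.tpcInterleave]
        rw [hseq]
        have hvals : [h s t i ⟨0, by omega⟩, cV s t (Sum.inr ⟨0, by omega⟩),
               h s t ⟨0, by omega⟩ ⟨0, by omega⟩, cV s t (Sum.inl ⟨0, by omega⟩),
               h s t ⟨0, by omega⟩ ⟨1, by omega⟩, cV s t (Sum.inr ⟨1, by omega⟩),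
               h s t i' ⟨1, by omega⟩] = [1, 2, 0, 1, 2, 0, 1] := by
          simp [h, hi, hi']
        rw [hvals]
        exact ok_seven
  · -- left-right : a single edge
    exact ⟨Walk.cons (adj_lr s t i j') Walk.nil, by simp [Walk.isPath_def],
      isTotalProper_of_ok (by
        have hseq : (Walk.cons (adj_lr s t i j') Walk.nil).totalColorSeq (cV s t) (cE s t)
            = [h s t i j'] := by simp [Walk.totalColorSeq, List.tpcInterleave]
        rw [hseq]; exact ok_single _)⟩
  · -- right-left : a single edge
    exact ⟨Walk.cons (adj_rl s t i' j) Walk.nil, by simp [Walk.isPath_def],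
      isTotalProper_of_ok (by
        have hseq : (Walk.cons (adj_rl s t i' j) Walk.nil).totalColorSeq (cV s t) (cE s t)
            = [h s t i' j] := by simp [Walk.totalColorSeq, List.tpcInterleave]
        rw [hseq]; exact ok_single _)⟩
  · -- both on the right
    have hjj : j ≠ j' := fun h => huv (by rw [h])
    have hjj' : (j : ℕ) ≠ (j' : ℕ) := fun h => hjj (Fin.ext h)
    have hjt := j.isLt
    have hj't := j'.isLt
    have key : ∃ i0 : Fin s, h s t i0 j ≠ cV s t (Sum.inl i0) ∧
        cV s t (Sum.inl i0) ≠ h s t i0 j' ∧ h s t i0 j ≠ h s t i0 j' := by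
      by_cases hm : (j : ℕ) ≤ 1 ∧ (j' : ℕ) ≤ 1
      · have hcase : ((j:ℕ) = 0 ∧ (j':ℕ) = 1) ∨ ((j:ℕ) = 1 ∧ (j':ℕ) = 0) := by omega
        rcases hcase with ⟨hj, hj'⟩ | ⟨hj, hj'⟩ <;>
          refine ⟨⟨0, by omega⟩, ?_, ?_, ?_⟩ <;> simp [h, hj, hj']
      · obtain ⟨m, hmdef⟩ : ∃ m, m = max (j : ℕ) (j' : ℕ) := ⟨_, rfl⟩
        have hm2 : 2 ≤ m := by omega
        have hmlt : m - 1 < s := by omega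
        have hone : m - 1 + 1 = m := by omega
        have hne : m - 1 ≠ 0 := by omega
        have hcase : ((j:ℕ) = m ∧ (j':ℕ) ≠ m) ∨ ((j:ℕ) ≠ m ∧ (j':ℕ) = m) := by omega
        rcases hcase with ⟨hj, hj'⟩ | ⟨hj, hj'⟩ <;>
          refine ⟨⟨m - 1, hmlt⟩, ?_, ?_, ?_⟩ <;>
          simp [h, hne, hone, hj, hj']
    obtain ⟨i0, k1, k2, k3⟩ := key
    refine ⟨Walk.cons (adj_rl s t i0 j) (Walk.cons (adj_lr s t i0 j') Walk.nil), ?_, ?_⟩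
    · simp [Walk.isPath_def, hjj]
    · apply isTotalProper_of_ok
      have hseq : (Walk.cons (adj_rl s t i0 j)
          (Walk.cons (adj_lr s t i0 j') Walk.nil)).totalColorSeq (cV s t) (cE s t)
          = [h s t i0 j, cV s t (Sum.inl i0), h s t i0 j'] := by
        simp [Walk.totalColorSeq, List.tpcInterleave]
      rw [hseq]
      exact ok_triple k1 k2 k3

theorem lower (s t : ℕ) (ht : 2 ≤ t) (k : ℕ)
    (hk : ∃ (cV : Fin s ⊕ Fin t → Fin k) (cE : Sym2 (Fin s ⊕ Fin t) → Fin k),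
      (completeBipartiteGraph (Fin s) (Fin t)).IsTPCColoring cV cE) : 3 ≤ k := by
  obtain ⟨cV, cE, hc⟩ := hk
  have huv : (Sum.inr ⟨0, by omega⟩ : Fin s ⊕ Fin t) ≠ Sum.inr ⟨1, by omega⟩ := by
    simp [Fin.ext_iff]
  obtain ⟨p, hpath, hprop⟩ := hc _ _ huv
  have h0 : p.length ≠ 0 := fun hh => huv (Walk.eq_of_length_eq_zero hh)
  have h1 : p.length ≠ 1 := by
    intro hh
    have := Walk.adj_of_length_eq_one hh
    simp at this
  have hseqlen : 3 ≤ (p.totalColorSeq cV cE).length := by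
    rw [Walk.totalColorSeq, interleave_length]
    simp [Walk.length_edges, Walk.length_support]
    omega
  set L := p.totalColorSeq cV cE with hL
  have e0 : L[0]? = some (L[0]'(by omega)) := List.getElem?_eq_getElem (by omega)
  have e1 : L[1]? = some (L[1]'(by omega)) := List.getElem?_eq_getElem (by omega)
  have e2 : L[2]? = some (L[2]'(by omega)) := List.getElem?_eq_getElem (by omega)
  have hab := hprop 0 _ _ e0 (Or.inl e1)
  have hac := hprop 0 _ _ e0 (Or.inr e2)
  have hbc := hprop 1 _ _ e1 (Or.inl e2)
  have hcard : ({L[0]'(by omega), L[1]'(by omega), L[2]'(by omega)} : Finset (Fin k)).card ≤ k := by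
    simpa using Finset.card_le_univ
      ({L[0]'(by omega), L[1]'(by omega), L[2]'(by omega)} : Finset (Fin k))
  rw [Finset.card_insert_of_notMem (by simp [hab, hac]),
    Finset.card_insert_of_notMem (by simp [hbc]), Finset.card_singleton] at hcard
  exact hcard

end TPCAux

open SimpleGraph in
theorem tpc_completeBipartite (s t : ℕ) (hts : t ≤ s) (ht : 2 ≤ t) :
    (completeBipartiteGraph (Fin s) (Fin t)).tpc = 3 := by
  have h3 : 3 ∈ {k | ∃ (cV : Fin s ⊕ Fin t → Fin k) (cE : Sym2 (Fin s ⊕ Fin t) → Fin k),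
      (completeBipartiteGraph (Fin s) (Fin t)).IsTPCColoring cV cE} :=
    ⟨TPCAux.cV s t, TPCAux.cE s t, TPCAux.isTPC s t hts ht⟩
  refine le_antisymm (Nat.sInf_le h3) ?_
  have hmem := Nat.sInf_mem (⟨3, h3⟩ : Set.Nonempty _)
  exact TPCAux.lower s t ht _ hmem
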